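/- Let U = {(x,y,y₁,y₂,z) ∈ ℝ⁵ : y₂ ≠ 0}, X₁ = ∂/∂y₂ and X₂ = ∂/∂x + y₁ ∂/∂y + y₂ ∂/∂y₁ + (y + y₂^{1/3}) ∂/∂z. Then at every point p ∈ U the five vectors X₁(p), X₂(p), [X₁,X₂](p), [X₁,[X₁,X₂]](p), [X₂,[X₁,X₂]](p) form a basis of ℝ⁵; that is, the Monge distribution of z' = y + (y'')^{1/3} is generic on U. -/

import Mathlib

/-- Lie bracket of vector fields on ℝ⁵, `[V,W](p) = DW(p)(V(p)) − DV(p)(W(p))`. -/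
noncomputable def lieBracket (V W : (Fin 5 → ℝ) → (Fin 5 → ℝ)) :
    (Fin 5 → ℝ) → (Fin 5 → ℝ) :=
  fun p => fderiv ℝ W p (V p) - fderiv ℝ V p (W p)

/-- The real odd cube root: `cbrt t = sign(t) · |t|^(1/3)`. -/
noncomputable def cbrt (t : ℝ) : ℝ := Real.sign t * |t| ^ ((1 : ℝ) / 3)

/-- `X₁ = ∂/∂y₂`, coordinates `(x, y, y₁, y₂, z) = (p 0, p 1, p 2, p 3, p 4)`. -/
noncomputable def X₁ : (Fin 5 → ℝ) → (Fin 5 → ℝ) := fun _ => ![0, 0, 0, 1, 0]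

/-- `X₂ = ∂/∂x + y₁ ∂/∂y + y₂ ∂/∂y₁ + (y + y₂^{1/3}) ∂/∂z`. -/
noncomputable def X₂ : (Fin 5 → ℝ) → (Fin 5 → ℝ) :=
  fun p => ![1, p 2, p 3, 0, p 1 + cbrt (p 3)]

noncomputable def c₁ (t : ℝ) : ℝ := (1/3) * |t| ^ (-(2:ℝ)/3)
noncomputable def c₂ (t : ℝ) : ℝ := Real.sign t * (-(2:ℝ)/9 * |t| ^ (-(5:ℝ)/3))

lemma hd_cbrt {t : ℝ} (ht : t ≠ 0) : HasDerivAt cbrt (c₁ t) t := by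
  rcases ht.lt_or_gt with h | h
  · have hev : cbrt =ᶠ[nhds t] fun s => -((-s) ^ ((1:ℝ)/3)) := by
      filter_upwards [isOpen_Iio.mem_nhds h] with s hs
      rw [Set.mem_Iio] at hs
      simp [cbrt, Real.sign_of_neg hs, abs_of_neg hs]
    have h1 : HasDerivAt (fun s : ℝ => (-s) ^ ((1:ℝ)/3))
        ((1:ℝ)/3 * (-t) ^ ((1:ℝ)/3 - 1) * (-1)) t :=
      (Real.hasDerivAt_rpow_const (Or.inl (neg_ne_zero.2 ht))).comp t (hasDerivAt_neg t)
    have := (h1.neg).congr_of_eventuallyEq hev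
    refine this.congr_deriv (Eq.symm ?_)
    rw [c₁, abs_of_neg h]
    ring_nf
  · have hev : cbrt =ᶠ[nhds t] fun s => s ^ ((1:ℝ)/3) := by
      filter_upwards [isOpen_Ioi.mem_nhds h] with s hs
      rw [Set.mem_Ioi] at hs
      simp [cbrt, Real.sign_of_pos hs, abs_of_pos hs]
    have h1 : HasDerivAt (fun s : ℝ => s ^ ((1:ℝ)/3)) ((1:ℝ)/3 * t ^ ((1:ℝ)/3 - 1)) t :=
      Real.hasDerivAt_rpow_const (Or.inl ht)
    have := h1.congr_of_eventuallyEq hev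
    refine this.congr_deriv (Eq.symm ?_)
    rw [c₁, abs_of_pos h]
    norm_num

lemma hd_c₁ {t : ℝ} (ht : t ≠ 0) : HasDerivAt c₁ (c₂ t) t := by
  rcases ht.lt_or_gt with h | h
  · have hev : c₁ =ᶠ[nhds t] fun s => (1/3) * (-s) ^ (-(2:ℝ)/3) := by
      filter_upwards [isOpen_Iio.mem_nhds h] with s hs
      rw [Set.mem_Iio] at hs
      simp [c₁, abs_of_neg hs]
    have h1 : HasDerivAt (fun s : ℝ => (-s) ^ (-(2:ℝ)/3))
        ((-(2:ℝ)/3) * (-t) ^ (-(2:ℝ)/3 - 1) * (-1)) t :=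
      (Real.hasDerivAt_rpow_const (Or.inl (neg_ne_zero.2 ht))).comp t (hasDerivAt_neg t)
    have := (h1.const_mul ((1:ℝ)/3)).congr_of_eventuallyEq hev
    refine this.congr_deriv (Eq.symm ?_)
    rw [c₂, Real.sign_of_neg h, abs_of_neg h]
    ring_nf
  · have hev : c₁ =ᶠ[nhds t] fun s => (1/3) * s ^ (-(2:ℝ)/3) := by
      filter_upwards [isOpen_Ioi.mem_nhds h] with s hs
      rw [Set.mem_Ioi] at hs
      simp [c₁, abs_of_pos hs]
    have h1 : HasDerivAt (fun s : ℝ => s ^ (-(2:ℝ)/3))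
        ((-(2:ℝ)/3) * t ^ (-(2:ℝ)/3 - 1)) t :=
      Real.hasDerivAt_rpow_const (Or.inl ht)
    have := (h1.const_mul ((1:ℝ)/3)).congr_of_eventuallyEq hev
    refine this.congr_deriv (Eq.symm ?_)
    rw [c₂, Real.sign_of_pos h, abs_of_pos h]
    ring_nf

open ContinuousLinearMap in
noncomputable def L₂ (a : ℝ) : (Fin 5 → ℝ) →L[ℝ] (Fin 5 → ℝ) :=
  pi ![0, proj 2, proj 3, 0, proj 1 + c₁ a • proj 3]

open ContinuousLinearMap in
noncomputable def L₃ (a : ℝ) : (Fin 5 → ℝ) →L[ℝ] (Fin 5 → ℝ) :=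
  pi ![0, 0, 0, 0, c₂ a • proj 3]

lemma hX₂ {p : Fin 5 → ℝ} (hp : p 3 ≠ 0) : HasFDerivAt X₂ (L₂ (p 3)) p := by
  apply hasFDerivAt_pi.2
  intro i
  fin_cases i <;>
    simp only [X₂, Matrix.cons_val_zero, Matrix.cons_val_one, Matrix.head_cons,
      Matrix.cons_val_two, Matrix.tail_cons, Matrix.cons_val_three, Matrix.cons_val_four,
      Fin.isValue]
  · exact hasFDerivAt_const 1 p
  · exact hasFDerivAt_apply 2 p
  · exact hasFDerivAt_apply 3 p
  · exact hasFDerivAt_const 0 p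
  · exact (hasFDerivAt_apply 1 p).add
      ((hd_cbrt hp).comp_hasFDerivAt (h₂ := cbrt) (f := fun q : Fin 5 → ℝ => q 3) p (hasFDerivAt_apply 3 p))

noncomputable def Y₃ : (Fin 5 → ℝ) → (Fin 5 → ℝ) := fun p => ![0, 0, 1, 0, c₁ (p 3)]

lemma hY₃ {p : Fin 5 → ℝ} (hp : p 3 ≠ 0) : HasFDerivAt Y₃ (L₃ (p 3)) p := by
  apply hasFDerivAt_pi.2
  intro i
  fin_cases i <;>
    simp only [Y₃, Matrix.cons_val_zero, Matrix.cons_val_one, Matrix.head_cons,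
      Matrix.cons_val_two, Matrix.tail_cons, Matrix.cons_val_three, Matrix.cons_val_four,
      Fin.isValue]
  · exact hasFDerivAt_const 0 p
  · exact hasFDerivAt_const 0 p
  · exact hasFDerivAt_const 1 p
  · exact hasFDerivAt_const 0 p
  · exact (hd_c₁ hp).comp_hasFDerivAt (h₂ := c₁) (f := fun q : Fin 5 → ℝ => q 3) p (hasFDerivAt_apply 3 p)

lemma lie12 {p : Fin 5 → ℝ} (hp : p 3 ≠ 0) : lieBracket X₁ X₂ p = Y₃ p := by
  have h1 : fderiv ℝ X₁ p = 0 := (hasFDerivAt_const (![0, 0, 0, 1, 0] : Fin 5 → ℝ) p).fderiv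
  have h2 : fderiv ℝ X₂ p = L₂ (p 3) := (hX₂ hp).fderiv
  rw [lieBracket, h1, h2]
  funext i
  fin_cases i <;>
    simp [L₂, Y₃, X₁, ContinuousLinearMap.pi_apply, ContinuousLinearMap.proj_apply]

lemma hc₂ {t : ℝ} (ht : t ≠ 0) : c₂ t ≠ 0 := by
  have h1 : Real.sign t ≠ 0 := by
    rcases ht.lt_or_gt with h | h
    · rw [Real.sign_of_neg h]; norm_num
    · rw [Real.sign_of_pos h]; norm_num
  have h2 : |t| ^ (-(5:ℝ)/3) ≠ 0 := (Real.rpow_pos_of_pos (abs_pos.2 ht) _).ne'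
  simp [c₂]
  tauto

lemma fderiv_lie12 {p : Fin 5 → ℝ} (hp : p 3 ≠ 0) :
    fderiv ℝ (lieBracket X₁ X₂) p = L₃ (p 3) := by
  have hev : lieBracket X₁ X₂ =ᶠ[nhds p] Y₃ := by
    have hopen : IsOpen {q : Fin 5 → ℝ | q 3 ≠ 0} :=
      isOpen_ne.preimage (continuous_apply 3)
    filter_upwards [hopen.mem_nhds hp] with q hq
    exact lie12 hq
  rw [hev.fderiv_eq]
  exact (hY₃ hp).fderiv

theorem monge_newex_generic :
    ∀ p : Fin 5 → ℝ, p 3 ≠ 0 →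
      LinearIndependent ℝ
        ![X₁ p, X₂ p, lieBracket X₁ X₂ p,
          lieBracket X₁ (lieBracket X₁ X₂) p,
          lieBracket X₂ (lieBracket X₁ X₂) p] := by
  intro p hp
  have h1 : fderiv ℝ X₁ p = 0 := (hasFDerivAt_const (![0, 0, 0, 1, 0] : Fin 5 → ℝ) p).fderiv
  have h2 : fderiv ℝ X₂ p = L₂ (p 3) := (hX₂ hp).fderiv
  have h3 : lieBracket X₁ X₂ p = ![0, 0, 1, 0, c₁ (p 3)] := lie12 hp
  have h4 : lieBracket X₁ (lieBracket X₁ X₂) p = ![0, 0, 0, 0, c₂ (p 3)] := by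
    rw [lieBracket, fderiv_lie12 hp, h1]
    funext i
    fin_cases i <;>
      simp [L₃, X₁, ContinuousLinearMap.pi_apply, ContinuousLinearMap.proj_apply]
  have h5 : lieBracket X₂ (lieBracket X₁ X₂) p = ![0, -1, 0, 0, 0] := by
    rw [lieBracket, fderiv_lie12 hp, h2, h3]
    funext i
    fin_cases i <;>
      simp [L₂, L₃, X₂, ContinuousLinearMap.pi_apply, ContinuousLinearMap.proj_apply]
  rw [h3, h4, h5]
  have hX1 : X₁ p = ![0, 0, 0, 1, 0] := rfl
  have hX2 : X₂ p = ![1, p 2, p 3, 0, p 1 + cbrt (p 3)] := rfl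
  rw [hX1, hX2]
  have : LinearIndependent ℝ (fun i =>
      (Matrix.of ![![0, 0, 0, 1, 0], ![1, p 2, p 3, 0, p 1 + cbrt (p 3)],
        ![0, 0, 1, 0, c₁ (p 3)], ![0, 0, 0, 0, c₂ (p 3)],
        ![(0:ℝ), -1, 0, 0, 0]]) i) := by
    refine Matrix.linearIndependent_rows_iff_isUnit.2 ?_
    rw [Matrix.isUnit_iff_isUnit_det,
      isUnit_iff_ne_zero]
    have hdet : (Matrix.of ![![0, 0, 0, 1, 0], ![1, p 2, p 3, 0, p 1 + cbrt (p 3)],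
        ![0, 0, 1, 0, c₁ (p 3)], ![0, 0, 0, 0, c₂ (p 3)],
        ![(0:ℝ), -1, 0, 0, 0]]).det = c₂ (p 3) := by
      simp [Matrix.det_succ_row_zero, Fin.sum_univ_succ, Fin.succAbove]
      norm_num

    rw [hdet]
    exact hc₂ hp
  exact this
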